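/- Let E be a normed vector space. (1) If A is a non-empty internal subset of G_E and u ∈ G_E, then there exists a ∈ A with ‖u−a‖ ≤ ‖u−v‖ for all v ∈ A. (2) If A is a sharply bounded, non-empty internal subset of G_E, then {‖u‖ : u∈A} reaches a maximum in R̃: there exists a ∈ A with ‖v‖ ≤ ‖a‖ for all v ∈ A. (3) A sharply bounded, non-empty internal subset of G_E is not open in the sharp topology. -/

import Mathlib

open Filter Topology Asymptotics

noncomputable section

namespace ColombeauPaper

variable {ι κ : Type*} {E : Type*} [AddCommGroup E] [Module ℝ E]
  {F : Type*} [AddCommGroup F] [Module ℝ F]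

/-- A net `(u_ε)` in `E` is moderate for the family of seminorms `p` if for every `i`
there is `M ∈ ℕ` with `p i (u_ε) ≤ ε ^ (-M)` for all sufficiently small `ε > 0`. -/
def IsModerate (p : ι → Seminorm ℝ E) (u : ℝ → E) : Prop :=
  ∀ i, ∃ M : ℕ, ∀ᶠ ε in 𝓝[>] (0 : ℝ), p i (u ε) ≤ ε ^ (-(M : ℤ))

/-- A net `(u_ε)` in `E` is negligible if for every `i` and every `m ∈ ℕ` one has
`p i (u_ε) ≤ ε ^ m` for all sufficiently small `ε > 0`. -/
def IsNegligible (p : ι → Seminorm ℝ E) (u : ℝ → E) : Prop :=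
  ∀ i, ∀ m : ℕ, ∀ᶠ ε in 𝓝[>] (0 : ℝ), p i (u ε) ≤ ε ^ m

/-- A negligible net of real numbers. -/
def IsNegligibleR (n : ℝ → ℝ) : Prop :=
  ∀ m : ℕ, ∀ᶠ ε in 𝓝[>] (0 : ℝ), |n ε| ≤ ε ^ m

lemma small_mem : {ε : ℝ | 0 < ε ∧ ε ≤ 1 / 2} ∈ 𝓝[>] (0 : ℝ) := by
  have h : Set.Ioo (0 : ℝ) (1 / 2) ∈ 𝓝[>] (0 : ℝ) :=
    Ioo_mem_nhdsGT_of_mem ⟨le_refl 0, by norm_num⟩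
  filter_upwards [h] with ε hε
  exact ⟨hε.1, hε.2.le⟩

lemma zpow_neg_natCast_eq {ε : ℝ} (k : ℕ) : ε ^ (-(k : ℤ)) = ε⁻¹ ^ (k : ℤ) := by
  rw [zpow_neg, inv_zpow]

/-- The moderate nets form an additive subgroup of `(0,1) → E` (here modelled on `ℝ → E`,
with all conditions holding for sufficiently small `ε > 0`). -/
def moderateGroup (p : ι → Seminorm ℝ E) : AddSubgroup (ℝ → E) where
  carrier := {u | IsModerate p u}
  zero_mem' := by
    intro i
    refine ⟨0, ?_⟩
    filter_upwards [self_mem_nhdsWithin] with ε hε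
    have hε' : (0 : ℝ) < ε := hε
    simp only [Pi.zero_apply, map_zero]
    positivity
  add_mem' := by
    intro u v hu hv i
    obtain ⟨M, hM⟩ := hu i
    obtain ⟨N, hN⟩ := hv i
    refine ⟨max M N + 1, ?_⟩
    filter_upwards [hM, hN, small_mem] with ε h1 h2 h3
    obtain ⟨hε, hε2⟩ := h3
    have hinv : (1 : ℝ) ≤ ε⁻¹ := (one_le_inv₀ hε).2 (by linarith)
    have h2inv : (2 : ℝ) ≤ ε⁻¹ := by
      nlinarith [mul_inv_cancel₀ (ne_of_gt hε)]
    have key : ∀ k l : ℕ, k ≤ l → ε ^ (-(k : ℤ)) ≤ ε ^ (-(l : ℤ)) := by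
      intro k l hkl
      rw [zpow_neg_natCast_eq, zpow_neg_natCast_eq]
      exact zpow_le_zpow_right₀ hinv (by exact_mod_cast hkl)
    set K : ℕ := max M N with hK
    have h1' : p i (u ε) ≤ ε ^ (-(K : ℤ)) := h1.trans (key M K (le_max_left _ _))
    have h2' : p i (v ε) ≤ ε ^ (-(K : ℤ)) := h2.trans (key N K (le_max_right _ _))
    have tri : p i ((u + v) ε) ≤ p i (u ε) + p i (v ε) := by
      simpa using map_add_le_add (p i) (u ε) (v ε)
    have efin : ε ^ (-(K : ℤ)) * 2 ≤ ε ^ (-((K + 1 : ℕ) : ℤ)) := by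
      rw [zpow_neg_natCast_eq, zpow_neg_natCast_eq]
      push_cast
      have hnn : (0:ℝ) ≤ ε⁻¹ ^ (K : ℤ) := by positivity
      calc ε⁻¹ ^ (K : ℤ) * 2 ≤ ε⁻¹ ^ (K : ℤ) * ε⁻¹ :=
            mul_le_mul_of_nonneg_left h2inv hnn
        _ = ε⁻¹ ^ ((K : ℤ) + 1) := by rw [zpow_add₀ (by positivity : (ε⁻¹ : ℝ) ≠ 0), zpow_one]
    push_cast at efin ⊢
    linarith
  neg_mem' := by
    intro u hu i
    obtain ⟨M, hM⟩ := hu i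
    refine ⟨M, ?_⟩
    filter_upwards [hM] with ε h
    simpa [map_neg_eq_map] using h

/-- The negligible nets form an additive subgroup of the moderate ones. -/
def negligibleGroup (p : ι → Seminorm ℝ E) : AddSubgroup (moderateGroup p) where
  carrier := {u | IsNegligible p (u : ℝ → E)}
  zero_mem' := by
    intro i m
    filter_upwards [self_mem_nhdsWithin] with ε hε
    have hε' : (0 : ℝ) < ε := hε
    simp only [AddSubgroup.coe_zero, Pi.zero_apply, map_zero]
    positivity
  add_mem' := by
    intro u v hu hv i m
    filter_upwards [hu i (m + 1), hv i (m + 1), small_mem] with ε h1 h2 h3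
    obtain ⟨hε, hε2⟩ := h3
    have tri : p i (((u + v : moderateGroup p) : ℝ → E) ε)
        ≤ p i ((u : ℝ → E) ε) + p i ((v : ℝ → E) ε) := by
      simpa using map_add_le_add (p i) ((u : ℝ → E) ε) ((v : ℝ → E) ε)
    have hpow : ε ^ (m + 1) = ε ^ m * ε := pow_succ ε m
    nlinarith [pow_nonneg hε.le m]
  neg_mem' := by
    intro u hu i m
    filter_upwards [hu i m] with ε h
    have : ((-u : moderateGroup p) : ℝ → E) ε = -((u : ℝ → E) ε) := rfl
    rw [this, map_neg_eq_map]
    exact h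

/-- The Colombeau space based on `E` (with the family of seminorms `p`):
the quotient of the moderate nets by the negligible ones. -/
abbrev Colombeau (p : ι → Seminorm ℝ E) : Type _ :=
  moderateGroup p ⧸ negligibleGroup p

/-- The internal subset of `𝒢_E` generated by a net `(A_ε)` of subsets of `E`:
all `u` having a representative `(u_ε)` with `u_ε ∈ A_ε` for sufficiently small `ε`. -/
def internalSet (p : ι → Seminorm ℝ E) (A : ℝ → Set E) : Set (Colombeau p) :=
  {u | ∃ w : moderateGroup p, (QuotientAddGroup.mk w : Colombeau p) = u ∧
        ∀ᶠ ε in 𝓝[>] (0 : ℝ), (w : ℝ → E) ε ∈ A ε}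

/-- A subset of `𝒢_E` is internal if it is generated by some net of subsets of `E`. -/
def IsInternal (p : ι → Seminorm ℝ E) (A : Set (Colombeau p)) : Prop :=
  ∃ Anet : ℝ → Set E, A = internalSet p Anet

/-- `d_i(u, A) = inf_{v ∈ A} p_i (u - v)`, with value `+∞` for `A = ∅`. -/
def semiDist (p : ι → Seminorm ℝ E) (i : ι) (u : E) (A : Set E) : EReal :=
  ⨅ v ∈ A, ((p i (u - v) : ℝ) : EReal)

/-- A sharply bounded net of subsets of `E`. -/
def SharplyBoundedNet (p : ι → Seminorm ℝ E) (A : ℝ → Set E) : Prop :=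
  ∀ i, ∃ M : ℕ, ∀ᶠ ε in 𝓝[>] (0 : ℝ), ∀ w ∈ A ε, p i w ≤ ε ^ (-(M : ℤ))

/-- `p_i(u) ≤ α ^ t` in `ℝ̃` (where `α` is the class of `(ε)_ε`): some representative of the
net of seminorms is bounded by `ε ^ t` up to a negligible net for small `ε`. -/
def seminormLeAlpha (p : ι → Seminorm ℝ E) (i : ι) (u : Colombeau p) (t : ℝ) : Prop :=
  ∃ (w : moderateGroup p) (n : ℝ → ℝ), (QuotientAddGroup.mk w : Colombeau p) = u ∧
    IsNegligibleR n ∧ ∀ᶠ ε in 𝓝[>] (0 : ℝ), p i ((w : ℝ → E) ε) ≤ ε ^ t + n ε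

/-- The ultra-pseudo-seminorm `u ↦ |p_i(u)|_s = e^{-ν(p_i(u))}` on `𝒢_E`, where
`ν(x) = sup {b : |x_ε| = O(ε^b)}` is the valuation. -/
def sharpSemi (p : ι → Seminorm ℝ E) (i : ι) (u : Colombeau p) : ℝ :=
  sInf {r : ℝ | ∃ (b : ℝ) (w : moderateGroup p), (QuotientAddGroup.mk w : Colombeau p) = u ∧
    r = Real.exp (-b) ∧ (fun ε => (p i ((w : ℝ → E) ε) : ℝ)) =O[𝓝[>] (0 : ℝ)] fun ε => ε ^ b}

/-- The sharp topology on `𝒢_E`: the topology generated by the ultra-pseudo-seminorms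
`u ↦ |p_i(u)|_s`, i.e. generated by all the corresponding balls. -/
def sharpTopology (p : ι → Seminorm ℝ E) : TopologicalSpace (Colombeau p) :=
  TopologicalSpace.generateFrom
    {B | ∃ (u : Colombeau p) (i : ι) (r : ℝ), 0 < r ∧
          B = {v | sharpSemi p i (v - u) < r}}

lemma indicator_norm_le_one (S : Set ℝ) (ε : ℝ) :
    ‖S.indicator (fun _ => (1 : ℝ)) ε‖ ≤ 1 := by
  by_cases h : ε ∈ S <;>
    simp [Set.indicator_of_mem, Set.indicator_of_notMem, h]

lemma eAux_le (p : ι → Seminorm ℝ E) (S : Set ℝ) (i : ι) (ε : ℝ) (x : E) :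
    p i (S.indicator (fun _ => (1 : ℝ)) ε • x) ≤ p i x := by
  rw [map_smul_eq_mul]
  calc ‖S.indicator (fun _ => (1 : ℝ)) ε‖ * p i x ≤ 1 * p i x :=
        mul_le_mul_of_nonneg_right (indicator_norm_le_one S ε) (apply_nonneg _ _)
    _ = p i x := one_mul _

/-- Multiplication by the characteristic function `χ_S`, on representatives. -/
def eAux (p : ι → Seminorm ℝ E) (S : Set ℝ) : moderateGroup p →+ moderateGroup p where
  toFun u := ⟨fun ε => S.indicator (fun _ => (1 : ℝ)) ε • (u : ℝ → E) ε, by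
    have hu : IsModerate p (u : ℝ → E) := u.2
    intro i
    obtain ⟨M, hM⟩ := hu i
    refine ⟨M, ?_⟩
    filter_upwards [hM] with ε hε
    exact (eAux_le p S i ε _).trans hε⟩
  map_zero' := by
    apply Subtype.ext
    funext ε
    simp
  map_add' u v := by
    apply Subtype.ext
    funext ε
    simp [smul_add]

/-- Multiplication by `e_S`, the class of the characteristic function of `S ⊆ (0,1)`,
as a map `𝒢_E → 𝒢_E`. -/
def eMul (p : ι → Seminorm ℝ E) (S : Set ℝ) : Colombeau p →+ Colombeau p :=
  QuotientAddGroup.map _ _ (eAux p S) (by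
    intro u hu
    rw [AddSubgroup.mem_comap]
    have hu' : IsNegligible p (u : ℝ → E) := hu
    show IsNegligible p _
    intro i m
    filter_upwards [hu' i m] with ε hε
    exact (eAux_le p S i ε _).trans hε)

/-- The set of finite interleavings `∑_{j=1}^m e_{S_j} a_j` of elements of `A`,
over partitions `{S_1, …, S_m}` of `(0,1)`. -/
def interleaving (p : ι → Seminorm ℝ E) (A : Set (Colombeau p)) : Set (Colombeau p) :=
  {u | ∃ (m : ℕ) (S : Fin m → Set ℝ) (a : Fin m → Colombeau p),
        (∀ j, a j ∈ A) ∧ (∀ j, S j ⊆ Set.Ioo 0 1) ∧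
        (Pairwise fun j k => Disjoint (S j) (S k)) ∧ (⋃ j, S j) = Set.Ioo 0 1 ∧
        u = ∑ j, eMul p (S j) (a j)}

/-- The family of seminorms `max (p_i, q_j)` generating the product topology on `E × F`. -/
def prodSeminorm (p : ι → Seminorm ℝ E) (q : κ → Seminorm ℝ F) :
    ι × κ → Seminorm ℝ (E × F) :=
  fun ij => (p ij.1).comp (LinearMap.fst ℝ E F) ⊔ (q ij.2).comp (LinearMap.snd ℝ E F)

lemma prodSeminorm_apply (p : ι → Seminorm ℝ E) (q : κ → Seminorm ℝ F) (i : ι) (j : κ)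
    (x : E × F) : prodSeminorm p q (i, j) x = max (p i x.1) (q j x.2) := by
  simp [prodSeminorm, Seminorm.sup_apply, Seminorm.comp_apply]

/-- First component of a moderate net in `E × F`, as a moderate net in `E`. -/
def prodFstAux [Nonempty κ] (p : ι → Seminorm ℝ E) (q : κ → Seminorm ℝ F) :
    moderateGroup (prodSeminorm p q) →+ moderateGroup p where
  toFun w := ⟨fun ε => ((w : ℝ → E × F) ε).1, by
    have hw : IsModerate (prodSeminorm p q) (w : ℝ → E × F) := w.2
    intro i
    obtain ⟨j⟩ := ‹Nonempty κ›
    obtain ⟨M, hM⟩ := hw (i, j)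
    refine ⟨M, ?_⟩
    filter_upwards [hM] with ε hε
    calc p i (((w : ℝ → E × F) ε).1) ≤ prodSeminorm p q (i, j) ((w : ℝ → E × F) ε) := by
          rw [prodSeminorm_apply]; exact le_max_left _ _
      _ ≤ ε ^ (-(M : ℤ)) := hε⟩
  map_zero' := by apply Subtype.ext; funext ε; simp
  map_add' u v := by apply Subtype.ext; funext ε; simp

/-- Second component of a moderate net in `E × F`, as a moderate net in `F`. -/
def prodSndAux [Nonempty ι] (p : ι → Seminorm ℝ E) (q : κ → Seminorm ℝ F) :
    moderateGroup (prodSeminorm p q) →+ moderateGroup q where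
  toFun w := ⟨fun ε => ((w : ℝ → E × F) ε).2, by
    have hw : IsModerate (prodSeminorm p q) (w : ℝ → E × F) := w.2
    intro j
    obtain ⟨i⟩ := ‹Nonempty ι›
    obtain ⟨M, hM⟩ := hw (i, j)
    refine ⟨M, ?_⟩
    filter_upwards [hM] with ε hε
    calc q j (((w : ℝ → E × F) ε).2) ≤ prodSeminorm p q (i, j) ((w : ℝ → E × F) ε) := by
          rw [prodSeminorm_apply]; exact le_max_right _ _
      _ ≤ ε ^ (-(M : ℤ)) := hε⟩
  map_zero' := by apply Subtype.ext; funext ε; simp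
  map_add' u v := by apply Subtype.ext; funext ε; simp

/-- The canonical identification `𝒢_{E × F} ≅ 𝒢_E × 𝒢_F` (given on representatives by
`[(u_ε, v_ε)] ↦ ([(u_ε)], [(v_ε)])`). -/
def prodIdent [Nonempty ι] [Nonempty κ] (p : ι → Seminorm ℝ E) (q : κ → Seminorm ℝ F) :
    Colombeau (prodSeminorm p q) →+ Colombeau p × Colombeau q :=
  QuotientAddGroup.lift (negligibleGroup (prodSeminorm p q))
    (((QuotientAddGroup.mk' (negligibleGroup p)).comp (prodFstAux p q)).prod
      ((QuotientAddGroup.mk' (negligibleGroup q)).comp (prodSndAux p q)))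
    (by
      intro w hw
      have hw' : IsNegligible (prodSeminorm p q) (w : ℝ → E × F) := hw
      rw [AddMonoidHom.mem_ker]
      refine Prod.ext ?_ ?_
      · show (QuotientAddGroup.mk' (negligibleGroup p)) (prodFstAux p q w) = 0
        rw [QuotientAddGroup.mk'_apply, QuotientAddGroup.eq_zero_iff]
        show IsNegligible p _
        intro i m
        obtain ⟨j⟩ := ‹Nonempty κ›
        filter_upwards [hw' (i, j) m] with ε hε
        calc p i (((w : ℝ → E × F) ε).1)
            ≤ prodSeminorm p q (i, j) ((w : ℝ → E × F) ε) := by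
              rw [prodSeminorm_apply]; exact le_max_left _ _
          _ ≤ ε ^ m := hε
      · show (QuotientAddGroup.mk' (negligibleGroup q)) (prodSndAux p q w) = 0
        rw [QuotientAddGroup.mk'_apply, QuotientAddGroup.eq_zero_iff]
        show IsNegligible q _
        intro j m
        obtain ⟨i⟩ := ‹Nonempty ι›
        filter_upwards [hw' (i, j) m] with ε hε
        calc q j (((w : ℝ → E × F) ε).2)
            ≤ prodSeminorm p q (i, j) ((w : ℝ → E × F) ε) := by
              rw [prodSeminorm_apply]; exact le_max_right _ _
          _ ≤ ε ^ m := hε)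

/-- A subset of `𝒢_E × 𝒢_F` is internal if, under the canonical identification
`𝒢_{E×F} ≅ 𝒢_E × 𝒢_F`, it corresponds to an internal subset of `𝒢_{E×F}`. -/
def IsInternalProd [Nonempty ι] [Nonempty κ] (p : ι → Seminorm ℝ E) (q : κ → Seminorm ℝ F)
    (C : Set (Colombeau p × Colombeau q)) : Prop :=
  ∃ Cnet : ℝ → Set (E × F),
    C = prodIdent p q '' internalSet (prodSeminorm p q) Cnet

section Normed

variable (V : Type*) [NormedAddCommGroup V] [NormedSpace ℝ V]

/-- The norm of a normed space, as a one-element family of seminorms. -/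
abbrev normFamily : Unit → Seminorm ℝ V := fun _ => normSeminorm ℝ V

/-- The Colombeau space based on a normed space `V`. -/
abbrev GN := Colombeau (normFamily V)

variable {V}

/-- `‖u‖ ≤ α ^ t` in `ℝ̃`, where `α` is the class of `(ε)_ε`. -/
def normLeAlpha (u : GN V) (t : ℝ) : Prop :=
  ∃ (w : moderateGroup (normFamily V)) (n : ℝ → ℝ),
    (QuotientAddGroup.mk w : GN V) = u ∧ IsNegligibleR n ∧
    ∀ᶠ ε in 𝓝[>] (0 : ℝ), ‖(w : ℝ → V) ε‖ ≤ ε ^ t + n ε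

/-- `‖u‖ ≤ ‖v‖` in `ℝ̃`. -/
def normLeNorm (u v : GN V) : Prop :=
  ∃ (a b : moderateGroup (normFamily V)) (n : ℝ → ℝ),
    (QuotientAddGroup.mk a : GN V) = u ∧ (QuotientAddGroup.mk b : GN V) = v ∧
    IsNegligibleR n ∧
    ∀ᶠ ε in 𝓝[>] (0 : ℝ), ‖(a : ℝ → V) ε‖ ≤ ‖(b : ℝ → V) ε‖ + n ε

/-- A subset `A ⊆ 𝒢_V` is sharply bounded if `‖u‖ ≤ α^{-M}` for some `M ∈ ℕ` and all `u ∈ A`. -/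
def SharplyBounded (A : Set (GN V)) : Prop :=
  ∃ M : ℕ, ∀ u ∈ A, normLeAlpha u (-(M : ℝ))

/-- A sharply bounded net of subsets of the normed space `V`. -/
def SharplyBoundedNetN (A : ℝ → Set V) : Prop :=
  ∃ M : ℕ, ∀ᶠ ε in 𝓝[>] (0 : ℝ), ∀ w ∈ A ε, ‖w‖ ≤ ε ^ (-(M : ℤ))

end Normed


section Proof4

variable {V : Type*} [NormedAddCommGroup V] [NormedSpace ℝ V]

lemma normFamily_apply' (i : Unit) (x : V) : normFamily V i x = ‖x‖ := rfl

lemma coe_sub_apply (x y : moderateGroup (normFamily V)) (ε : ℝ) :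
    ((x - y : moderateGroup (normFamily V)) : ℝ → V) ε = (x : ℝ → V) ε - (y : ℝ → V) ε := rfl

lemma coe_add_apply (x y : moderateGroup (normFamily V)) (ε : ℝ) :
    ((x + y : moderateGroup (normFamily V)) : ℝ → V) ε = (x : ℝ → V) ε + (y : ℝ → V) ε := rfl

/-- the canonical negligible slack function -/
noncomputable def negl0 : ℝ → ℝ := fun ε => ε ^ ⌈ε⁻¹⌉₊

lemma negl0_pos {ε : ℝ} (h : 0 < ε) : 0 < negl0 ε := pow_pos h _

lemma negl0_negligible : IsNegligibleR negl0 := by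
  intro m
  have h : Set.Ioo (0:ℝ) (min 1 (1/(m+1))) ∈ 𝓝[>] (0:ℝ) :=
    Ioo_mem_nhdsGT_of_mem ⟨le_refl 0, by positivity⟩
  filter_upwards [h] with ε ⟨h0, h1⟩
  have hε1 : ε ≤ 1 := le_of_lt (lt_of_lt_of_le h1 (min_le_left _ _))
  have hεm : ε < 1/(m+1) := lt_of_lt_of_le h1 (min_le_right _ _)
  have hm : (m : ℝ) ≤ ⌈ε⁻¹⌉₊ := by
    have h2 : (m:ℝ) + 1 ≤ ε⁻¹ := by
      rw [le_inv_comm₀ (by positivity) h0]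
      rw [inv_eq_one_div]
      exact hεm.le
    calc (m:ℝ) ≤ ε⁻¹ - 1 := by linarith
      _ ≤ ⌈ε⁻¹⌉₊ := by
          have := Nat.le_ceil ε⁻¹
          linarith
  have hm' : m ≤ ⌈ε⁻¹⌉₊ := by exact_mod_cast hm
  rw [abs_of_nonneg (le_of_lt (negl0_pos h0))]
  exact pow_le_pow_of_le_one h0.le hε1 hm'

lemma negl0_le_one {ε : ℝ} (h0 : 0 < ε) (h1 : ε ≤ 1) : negl0 ε ≤ 1 :=
  pow_le_one₀ h0.le h1

lemma one_le_zpow_neg {ε : ℝ} (h0 : 0 < ε) (h1 : ε ≤ 1) (K : ℕ) : 1 ≤ ε ^ (-(K:ℤ)) := by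
  rw [zpow_neg_natCast_eq]
  exact one_le_zpow₀ ((one_le_inv₀ h0).2 h1) (by positivity)

lemma zpow_neg_mono {ε : ℝ} (h0 : 0 < ε) (h1 : ε ≤ 1) {k l : ℕ} (hkl : k ≤ l) :
    ε ^ (-(k : ℤ)) ≤ ε ^ (-(l : ℤ)) := by
  rw [zpow_neg_natCast_eq, zpow_neg_natCast_eq]
  exact zpow_le_zpow_right₀ ((one_le_inv₀ h0).2 h1) (by exact_mod_cast hkl)

lemma two_le_inv {ε : ℝ} (h0 : 0 < ε) (h2 : ε ≤ 1/2) : (2:ℝ) ≤ ε⁻¹ := by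
  nlinarith [mul_inv_cancel₀ (ne_of_gt h0)]

lemma zpow_succ_bound {ε : ℝ} (h0 : 0 < ε) (h2 : ε ≤ 1/2) (M : ℕ) :
    2 * ε ^ (-(M:ℤ)) ≤ ε ^ (-((M+1:ℕ):ℤ)) := by
  have hinv := two_le_inv h0 h2
  rw [zpow_neg_natCast_eq, zpow_neg_natCast_eq]
  push_cast
  rw [zpow_add₀ (by positivity : (ε⁻¹:ℝ) ≠ 0), zpow_one]
  have hnn : (0:ℝ) ≤ ε⁻¹ ^ (M : ℤ) := by positivity
  nlinarith

lemma zpow_add_two_bound {ε : ℝ} (h0 : 0 < ε) (h2 : ε ≤ 1/2) (S : ℕ) :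
    4 * ε ^ (-(S:ℤ)) ≤ ε ^ (-((S+2:ℕ):ℤ)) := by
  have hinv := two_le_inv h0 h2
  rw [zpow_neg_natCast_eq, zpow_neg_natCast_eq]
  push_cast
  rw [zpow_add₀ (by positivity : (ε⁻¹:ℝ) ≠ 0)]
  have hnn : (0:ℝ) ≤ ε⁻¹ ^ (S : ℤ) := by positivity
  have h4 : (4:ℝ) ≤ ε⁻¹ ^ (2:ℤ) := by
    rw [zpow_two]; nlinarith
  nlinarith

end Proof4

section Proof4b
variable {V : Type*} [NormedAddCommGroup V] [NormedSpace ℝ V]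

lemma part1 (A : Set (GN V)) (hA : IsInternal (normFamily V) A) (hne : A.Nonempty)
    (u : GN V) : ∃ a ∈ A, ∀ v ∈ A, normLeNorm (u - a) (u - v) := by
  classical
  obtain ⟨Anet, rfl⟩ := hA
  obtain ⟨a0, b0, hb0eq, hb0mem⟩ := hne
  obtain ⟨u0, rfl⟩ := QuotientAddGroup.mk_surjective u
  set D : ℝ → ℝ := fun ε => sInf ((fun x => ‖(u0 : ℝ → V) ε - x‖) '' Anet ε) with hD
  have hDle : ∀ ε, ∀ x ∈ Anet ε, D ε ≤ ‖(u0 : ℝ → V) ε - x‖ := by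
    intro ε x hx
    exact csInf_le ⟨0, by rintro d ⟨y, hy, rfl⟩; positivity⟩ ⟨x, hx, rfl⟩
  have hex : ∀ ε : ℝ, ∃ x : V, ((Anet ε).Nonempty ∧ 0 < ε) →
      x ∈ Anet ε ∧ ‖(u0 : ℝ → V) ε - x‖ ≤ D ε + negl0 ε := by
    intro ε
    by_cases h : (Anet ε).Nonempty ∧ 0 < ε
    · obtain ⟨d, ⟨x, hx, rfl⟩, hlt⟩ :=
        Real.lt_sInf_add_pos (h.1.image _) (negl0_pos h.2)
      exact ⟨x, fun _ => ⟨hx, hlt.le⟩⟩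
    · exact ⟨0, fun hc => absurd hc h⟩
  choose f hf using hex
  have hev : ∀ᶠ ε in 𝓝[>] (0:ℝ), f ε ∈ Anet ε ∧ ‖(u0 : ℝ → V) ε - f ε‖ ≤ D ε + negl0 ε := by
    filter_upwards [hb0mem, self_mem_nhdsWithin] with ε h1 h2
    exact hf ε ⟨⟨_, h1⟩, h2⟩
  have hu0mod : IsModerate (normFamily V) (u0 : ℝ → V) := u0.2
  have hb0mod : IsModerate (normFamily V) (b0 : ℝ → V) := b0.2
  obtain ⟨Mu, hMu⟩ := hu0mod ()
  obtain ⟨Mb, hMb⟩ := hb0mod ()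
  have hmod : IsModerate (normFamily V) f := by
    intro i
    refine ⟨Mu + Mu + Mb + 2, ?_⟩
    filter_upwards [hev, hb0mem, hMu, hMb, small_mem] with ε h1 h2 h3 h4 h5
    obtain ⟨h0, h12⟩ := h5
    have hε1 : ε ≤ 1 := by linarith
    have hDb : D ε ≤ ‖(u0 : ℝ → V) ε - (b0 : ℝ → V) ε‖ := hDle ε _ h2
    have hnorm : ‖f ε‖ ≤ 2 * ‖(u0:ℝ→V) ε‖ + ‖(b0:ℝ→V) ε‖ + 1 := by
      have t1 : ‖f ε‖ ≤ ‖(u0:ℝ→V) ε‖ + ‖(u0:ℝ→V) ε - f ε‖ := by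
        have := norm_sub_le ((u0:ℝ→V) ε) ((u0:ℝ→V) ε - f ε)
        simpa using this
      have t2 : ‖(u0:ℝ→V) ε - (b0:ℝ→V) ε‖ ≤ ‖(u0:ℝ→V) ε‖ + ‖(b0:ℝ→V) ε‖ :=
        norm_sub_le _ _
      have t3 := negl0_le_one h0 hε1
      linarith [h1.2]
    have hMuS : ε ^ (-(Mu:ℤ)) ≤ ε ^ (-((Mu+Mu+Mb:ℕ):ℤ)) :=
      zpow_neg_mono h0 hε1 (by omega)
    have hMbS : ε ^ (-(Mb:ℤ)) ≤ ε ^ (-((Mu+Mu+Mb:ℕ):ℤ)) :=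
      zpow_neg_mono h0 hε1 (by omega)
    have hone : (1:ℝ) ≤ ε ^ (-((Mu+Mu+Mb:ℕ):ℤ)) := one_le_zpow_neg h0 hε1 _
    have hfin : 4 * ε ^ (-((Mu+Mu+Mb:ℕ):ℤ)) ≤ ε ^ (-((Mu+Mu+Mb+2:ℕ):ℤ)) :=
      zpow_add_two_bound h0 h12 _
    have : normFamily V i (f ε) = ‖f ε‖ := rfl
    rw [this]
    have hn1 : normFamily V () ((u0:ℝ→V) ε) = ‖(u0:ℝ→V) ε‖ := rfl
    have hn2 : normFamily V () ((b0:ℝ→V) ε) = ‖(b0:ℝ→V) ε‖ := rfl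
    rw [hn1] at h3; rw [hn2] at h4
    have : (Mu+Mu+Mb+2 : ℕ) = ((Mu+Mu+Mb:ℕ)+2 : ℕ) := by omega
    rw [this]
    linarith
  refine ⟨QuotientAddGroup.mk ⟨f, hmod⟩, ⟨⟨f, hmod⟩, rfl, ?_⟩, ?_⟩
  · filter_upwards [hev] with ε h; exact h.1
  · rintro v ⟨wv, rfl, hwv⟩
    refine ⟨u0 - ⟨f, hmod⟩, u0 - wv, negl0, ?_, ?_, negl0_negligible, ?_⟩
    · rw [QuotientAddGroup.mk_sub]
    · rw [QuotientAddGroup.mk_sub]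
    · filter_upwards [hev, hwv] with ε h1 h2
      have hDv : D ε ≤ ‖(u0:ℝ→V) ε - (wv:ℝ→V) ε‖ := hDle ε _ h2
      rw [coe_sub_apply, coe_sub_apply]
      linarith [h1.2]

end Proof4b

section Proof4c
variable {V : Type*} [NormedAddCommGroup V] [NormedSpace ℝ V]

lemma rpow_neg_nat_eq_zpow {ε : ℝ} (h0 : 0 < ε) (M : ℕ) :
    ε ^ (-(M:ℝ)) = ε ^ (-(M:ℤ)) := by
  rw [show (-(M:ℝ)) = ((-(M:ℤ) : ℤ) : ℝ) by push_cast; ring, Real.rpow_intCast]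

lemma part2 (A : Set (GN V)) (hA : IsInternal (normFamily V) A) (hne : A.Nonempty)
    (hsb : SharplyBounded A) : ∃ a ∈ A, ∀ v ∈ A, normLeNorm v a := by
  classical
  obtain ⟨Anet, rfl⟩ := hA
  obtain ⟨M, hM⟩ := hsb
  set B : ℝ → Set V := fun ε => {x | x ∈ Anet ε ∧ ‖x‖ ≤ ε ^ (-((M+1:ℕ) : ℤ))} with hB
  set S : ℝ → ℝ := fun ε => sSup ((fun x => ‖x‖) '' B ε) with hS
  have hSle : ∀ ε, ∀ x ∈ B ε, ‖x‖ ≤ S ε := by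
    intro ε x hx
    exact le_csSup ⟨ε ^ (-((M+1:ℕ):ℤ)), by rintro d ⟨y, hy, rfl⟩; exact hy.2⟩ ⟨x, hx, rfl⟩
  -- any internal member's internal representative eventually lies in B
  have hkey : ∀ v ∈ internalSet (normFamily V) Anet,
      ∀ wv : moderateGroup (normFamily V),
      (QuotientAddGroup.mk wv : GN V) = v → (∀ᶠ ε in 𝓝[>] (0:ℝ), (wv:ℝ→V) ε ∈ Anet ε) →
      ∀ᶠ ε in 𝓝[>] (0:ℝ), (wv:ℝ→V) ε ∈ B ε := by
    intro v hv wv hveq hvmem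
    obtain ⟨w', n, hw'eq, hn, hw'⟩ := hM v hv
    have hd : wv - w' ∈ negligibleGroup (normFamily V) := by
      rw [← QuotientAddGroup.eq_iff_sub_mem]
      exact hveq.trans hw'eq.symm
    have hdneg : IsNegligible (normFamily V) ((wv - w' : moderateGroup (normFamily V)) : ℝ → V) := hd
    filter_upwards [hvmem, hw', hdneg () 1, hn 1, small_mem] with ε h1 h2 h3 h4 h5
    obtain ⟨h0, h12⟩ := h5
    have hε1 : ε ≤ 1 := by linarith
    refine ⟨h1, ?_⟩
    have hr : ε ^ (-(M:ℝ)) = ε ^ (-(M:ℤ)) := rpow_neg_nat_eq_zpow h0 M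
    rw [hr] at h2
    have h3' : ‖(wv:ℝ→V) ε - (w':ℝ→V) ε‖ ≤ ε ^ 1 := by
      have : normFamily V () (((wv - w' : moderateGroup (normFamily V)) : ℝ → V) ε)
          = ‖(wv:ℝ→V) ε - (w':ℝ→V) ε‖ := rfl
      rw [this] at h3; exact h3
    have htri : ‖(wv:ℝ→V) ε‖ ≤ ‖(w':ℝ→V) ε‖ + ‖(wv:ℝ→V) ε - (w':ℝ→V) ε‖ := by
      have := norm_sub_le ((w':ℝ→V) ε) ((w':ℝ→V) ε - (wv:ℝ→V) ε)
      simpa [norm_sub_rev] using this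
    have hsucc : 2 * ε ^ (-(M:ℤ)) ≤ ε ^ (-((M+1:ℕ):ℤ)) := zpow_succ_bound h0 h12 M
    have hone : (1:ℝ) ≤ ε ^ (-(M:ℤ)) := one_le_zpow_neg h0 hε1 M
    have hn4 : n ε ≤ ε ^ 1 := (le_abs_self _).trans h4
    have hpow1 : ε ^ 1 ≤ 1/2 := by simpa using h12
    linarith
  have hBne : ∀ᶠ ε in 𝓝[>] (0:ℝ), (B ε).Nonempty := by
    obtain ⟨a0, b0, hb0eq, hb0mem⟩ := hne
    filter_upwards [hkey a0 ⟨b0, hb0eq, hb0mem⟩ b0 hb0eq hb0mem] with ε h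
    exact ⟨_, h⟩
  have hex : ∀ ε : ℝ, ∃ x : V, ((B ε).Nonempty ∧ 0 < ε) →
      x ∈ B ε ∧ S ε ≤ ‖x‖ + negl0 ε := by
    intro ε
    by_cases h : (B ε).Nonempty ∧ 0 < ε
    · obtain ⟨d, ⟨x, hx, rfl⟩, hlt⟩ :=
        Real.add_neg_lt_sSup (h.1.image (fun x => ‖x‖)) (neg_neg_of_pos (negl0_pos h.2))
      exact ⟨x, fun _ => ⟨hx, by linarith⟩⟩
    · exact ⟨0, fun hc => absurd hc h⟩
  choose f hf using hex
  have hev : ∀ᶠ ε in 𝓝[>] (0:ℝ), f ε ∈ B ε ∧ S ε ≤ ‖f ε‖ + negl0 ε := by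
    filter_upwards [hBne, self_mem_nhdsWithin] with ε h1 h2
    exact hf ε ⟨h1, h2⟩
  have hmod : IsModerate (normFamily V) f := by
    intro i
    refine ⟨M + 1, ?_⟩
    filter_upwards [hev] with ε h
    exact h.1.2
  refine ⟨QuotientAddGroup.mk ⟨f, hmod⟩, ⟨⟨f, hmod⟩, rfl, ?_⟩, ?_⟩
  · filter_upwards [hev] with ε h; exact h.1.1
  · rintro v hv
    obtain ⟨wv, hwveq, hwv⟩ := id hv
    refine ⟨wv, ⟨f, hmod⟩, negl0, hwveq, rfl, negl0_negligible, ?_⟩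
    filter_upwards [hev, hkey v hv wv hwveq hwv] with ε h1 h2
    have := hSle ε _ h2
    linarith [h1.2]

end Proof4c

section Proof4d
variable {V : Type*} [NormedAddCommGroup V] [NormedSpace ℝ V]

/-- The defining set of the sharp ultra-pseudo-norm. -/
def ssSet (x : GN V) : Set ℝ :=
  {r : ℝ | ∃ (b : ℝ) (w : moderateGroup (normFamily V)),
    (QuotientAddGroup.mk w : GN V) = x ∧ r = Real.exp (-b) ∧
    (fun ε => ((normFamily V () ((w : ℝ → V) ε)) : ℝ)) =O[𝓝[>] (0:ℝ)] fun ε => ε ^ b}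

lemma sharpSemi_eq (x : GN V) : sharpSemi (normFamily V) () x = sInf (ssSet x) := rfl

lemma ssSet_bddBelow (x : GN V) : BddBelow (ssSet x) := by
  refine ⟨0, ?_⟩
  rintro r ⟨b, w, -, rfl, -⟩
  positivity

lemma ssSet_nonempty (x : GN V) : (ssSet x).Nonempty := by
  obtain ⟨w, rfl⟩ := QuotientAddGroup.mk_surjective x
  have hwmod : IsModerate (normFamily V) (w : ℝ → V) := w.2
  obtain ⟨Mw, hMw⟩ := hwmod ()
  refine ⟨Real.exp (-(-(Mw:ℝ))), -(Mw:ℝ), w, rfl, rfl, ?_⟩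
  apply Asymptotics.IsBigO.of_bound 1
  filter_upwards [hMw, self_mem_nhdsWithin] with ε h1 h2
  have h0 : (0:ℝ) < ε := h2
  rw [one_mul, Real.norm_of_nonneg (apply_nonneg _ _),
    Real.norm_of_nonneg (Real.rpow_nonneg h0.le _), rpow_neg_nat_eq_zpow h0]
  exact h1

lemma sharpSemi_le (x : GN V) (w : moderateGroup (normFamily V))
    (hw : (QuotientAddGroup.mk w : GN V) = x) (b C : ℝ)
    (h : ∀ᶠ ε in 𝓝[>] (0:ℝ), ‖(w:ℝ→V) ε‖ ≤ C * ε ^ b) :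
    sharpSemi (normFamily V) () x ≤ Real.exp (-b) := by
  rw [sharpSemi_eq]
  apply csInf_le (ssSet_bddBelow x)
  refine ⟨b, w, hw, rfl, ?_⟩
  apply Asymptotics.IsBigO.of_bound C
  filter_upwards [h, self_mem_nhdsWithin] with ε h1 h2
  have h0 : (0:ℝ) < ε := h2
  rw [Real.norm_of_nonneg (apply_nonneg _ _),
    Real.norm_of_nonneg (Real.rpow_nonneg h0.le _)]
  exact h1

lemma sharpSemi_lt_destruct {x : GN V} {r : ℝ}
    (h : sharpSemi (normFamily V) () x < r) :
    ∃ (b : ℝ) (w : moderateGroup (normFamily V)),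
      (QuotientAddGroup.mk w : GN V) = x ∧ Real.exp (-b) < r ∧
      (fun ε => ‖(w : ℝ → V) ε‖) =O[𝓝[>] (0:ℝ)] fun ε => ε ^ b := by
  rw [sharpSemi_eq] at h
  obtain ⟨r', hr1, hr2⟩ := (csInf_lt_iff (ssSet_bddBelow x) (ssSet_nonempty x)).1 h
  obtain ⟨b, w, hw, rfl, hO⟩ := hr1
  exact ⟨b, w, hw, hr2, hO⟩

lemma rpow_mono_exp {b b' : ℝ} (hb : b ≤ b') :
    (fun ε : ℝ => ε ^ b') =O[𝓝[>] (0:ℝ)] fun ε => ε ^ b := by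
  apply Asymptotics.IsBigO.of_bound 1
  filter_upwards [small_mem] with ε h
  obtain ⟨h0, h12⟩ := h
  rw [one_mul, Real.norm_of_nonneg (Real.rpow_nonneg h0.le _),
    Real.norm_of_nonneg (Real.rpow_nonneg h0.le _)]
  exact Real.rpow_le_rpow_of_exponent_ge h0 (by linarith) hb

lemma sharpSemi_add_lt {x y : GN V} {r : ℝ}
    (hx : sharpSemi (normFamily V) () x < r) (hy : sharpSemi (normFamily V) () y < r) :
    sharpSemi (normFamily V) () (x + y) < r := by
  obtain ⟨b1, w1, hw1, hlt1, hO1⟩ := sharpSemi_lt_destruct hx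
  obtain ⟨b2, w2, hw2, hlt2, hO2⟩ := sharpSemi_lt_destruct hy
  set b := min b1 b2 with hb
  have h1 := hO1.trans (rpow_mono_exp (min_le_left b1 b2))
  have h2 := hO2.trans (rpow_mono_exp (min_le_right b1 b2))
  have hsum : (fun ε => ‖((w1 + w2 : moderateGroup (normFamily V)) : ℝ → V) ε‖)
      =O[𝓝[>] (0:ℝ)] fun ε => ε ^ b := by
    refine (Asymptotics.isBigO_of_le _ ?_).trans (h1.add h2)
    intro ε
    rw [coe_add_apply, norm_norm]
    calc ‖(w1:ℝ→V) ε + (w2:ℝ→V) ε‖ ≤ ‖(w1:ℝ→V) ε‖ + ‖(w2:ℝ→V) ε‖ := norm_add_le _ _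
      _ ≤ ‖‖(w1:ℝ→V) ε‖ + ‖(w2:ℝ→V) ε‖‖ := le_abs_self _
  have hle : sharpSemi (normFamily V) () (x + y) ≤ Real.exp (-b) := by
    rw [sharpSemi_eq]
    apply csInf_le (ssSet_bddBelow _)
    exact ⟨b, w1 + w2, by rw [QuotientAddGroup.mk_add, hw1, hw2], rfl, hsum⟩
  have hfin : Real.exp (-b) < r := by
    rcases le_total b1 b2 with h | h
    · rwa [hb, min_eq_left h]
    · rwa [hb, min_eq_right h]
  linarith

lemma exists_ball {A : Set (GN V)}
    (hA : @IsOpen _ (sharpTopology (normFamily V)) A) :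
    ∀ a ∈ A, ∃ r > 0, ∀ v : GN V, sharpSemi (normFamily V) () (v - a) < r → v ∈ A := by
  have h : TopologicalSpace.GenerateOpen
      {B | ∃ (u : GN V) (i : Unit) (r : ℝ), 0 < r ∧
        B = {v | sharpSemi (normFamily V) i (v - u) < r}} A := hA
  clear hA
  induction h with
  | basic s hs =>
      intro a ha
      obtain ⟨u, i, r, hr, rfl⟩ := hs
      cases i
      refine ⟨r, hr, fun v hv => ?_⟩
      have ha' : sharpSemi (normFamily V) () (a - u) < r := ha
      have := sharpSemi_add_lt hv ha'
      show sharpSemi (normFamily V) () (v - u) < r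
      rwa [sub_add_sub_cancel] at this
  | univ => exact fun a _ => ⟨1, one_pos, fun _ _ => trivial⟩
  | inter s t hs ht ihs iht =>
      rintro a ⟨has, hat⟩
      obtain ⟨r1, hr1, h1⟩ := ihs a has
      obtain ⟨r2, hr2, h2⟩ := iht a hat
      exact ⟨min r1 r2, lt_min hr1 hr2, fun v hv =>
        ⟨h1 v (hv.trans_le (min_le_left _ _)), h2 v (hv.trans_le (min_le_right _ _))⟩⟩
  | sUnion S hS ih =>
      rintro a ⟨t, htS, hat⟩
      obtain ⟨r, hr, h⟩ := ih t htS a hat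
      exact ⟨r, hr, fun v hv => ⟨t, htS, h v hv⟩⟩

end Proof4d

section Proof4e
variable {V : Type*} [NormedAddCommGroup V] [NormedSpace ℝ V]

lemma rpow_half_step {ε : ℝ} (h0 : 0 < ε) (h12 : ε ≤ 1/2) (b : ℝ) :
    2 * ε ^ b ≤ ε ^ (b - 1) := by
  have hinv := two_le_inv h0 h12
  have h1 : ε ^ (b-1) = ε ^ b / ε := by
    rw [Real.rpow_sub h0, Real.rpow_one]
  rw [h1, div_eq_mul_inv]
  have hnn : (0:ℝ) ≤ ε ^ b := Real.rpow_nonneg h0.le b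
  nlinarith

set_option maxHeartbeats 1000000 in
lemma part3 (hnt : Nontrivial V) (A : Set (GN V)) (hA : IsInternal (normFamily V) A)
    (hne : A.Nonempty) (hsb : SharplyBounded A) :
    ¬ @IsOpen _ (sharpTopology (normFamily V)) A := by
  classical
  intro hopen
  obtain ⟨a, haA, hmax⟩ := part2 A hA hne hsb
  obtain ⟨M, hM⟩ := hsb
  obtain ⟨w, n0, hweq, hn0, hw⟩ := hM a haA
  obtain ⟨r, hr, hball⟩ := exists_ball hopen a haA
  obtain ⟨K, hK⟩ := exists_nat_gt ((M:ℝ) + 1 - Real.log r)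
  have hwmod : IsModerate (normFamily V) (w:ℝ→V) := w.2
  obtain ⟨Mw, hMw⟩ := hwmod ()
  have hgmod : IsModerate (normFamily V) (fun ε => ε ^ K • (w:ℝ→V) ε) := by
    intro i
    refine ⟨Mw, ?_⟩
    filter_upwards [hMw, small_mem] with ε h1 h2
    obtain ⟨h0, h12⟩ := h2
    have h1' : ‖(w:ℝ→V) ε‖ ≤ ε ^ (-(Mw:ℤ)) := h1
    show ‖ε ^ K • (w:ℝ→V) ε‖ ≤ ε ^ (-(Mw:ℤ))
    rw [norm_smul, Real.norm_of_nonneg (by positivity)]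
    have hp1 : ε ^ K ≤ 1 := pow_le_one₀ h0.le (by linarith)
    nlinarith [norm_nonneg ((w:ℝ→V) ε), pow_nonneg h0.le K]
  set wK : moderateGroup (normFamily V) := ⟨fun ε => ε ^ K • (w:ℝ→V) ε, hgmod⟩ with hwK
  have hva : (QuotientAddGroup.mk (w + wK) : GN V) - a = QuotientAddGroup.mk wK := by
    rw [QuotientAddGroup.mk_add, ← hweq, add_sub_cancel_left]
  have hsm : sharpSemi (normFamily V) () ((QuotientAddGroup.mk (w + wK) : GN V) - a)
      ≤ Real.exp (-((K:ℝ) - M - 1)) := by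
    rw [hva]
    apply sharpSemi_le _ wK rfl ((K:ℝ) - M - 1) 1
    filter_upwards [hw, hn0 1, small_mem] with ε h1 h2 h3
    obtain ⟨h0, h12⟩ := h3
    have hε1 : ε ≤ 1 := by linarith
    have hcoe : ‖(wK:ℝ→V) ε‖ = ε ^ K * ‖(w:ℝ→V) ε‖ := by
      show ‖ε ^ K • (w:ℝ→V) ε‖ = _
      rw [norm_smul, Real.norm_of_nonneg (by positivity)]
    rw [hcoe, one_mul]
    have hn : n0 ε ≤ ε := by
      have := (le_abs_self (n0 ε)).trans h2
      simpa using this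
    have e1 : (ε:ℝ) ^ K = ε ^ ((K:ℝ)) := (Real.rpow_natCast ε K).symm
    have e2 : ε ^ ((K:ℝ)) * ε ^ (-(M:ℝ)) = ε ^ ((K:ℝ) - M) := by
      rw [← Real.rpow_add h0]; ring_nf
    have e3 : ε ^ ((K:ℝ)) * ε = ε ^ ((K:ℝ) + 1) := by
      rw [Real.rpow_add h0, Real.rpow_one]
    have anti1 : ε ^ ((K:ℝ) + 1) ≤ ε ^ ((K:ℝ) - M) := by
      apply Real.rpow_le_rpow_of_exponent_ge h0 hε1
      have : (0:ℝ) ≤ (M:ℝ) := by positivity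
      linarith
    have step : 2 * ε ^ ((K:ℝ) - M) ≤ ε ^ ((K:ℝ) - M - 1) := rpow_half_step h0 h12 _
    have hwnn : (0:ℝ) ≤ ‖(w:ℝ→V) ε‖ := norm_nonneg _
    have hKnn : (0:ℝ) ≤ ε ^ K := pow_nonneg h0.le K
    calc ε ^ K * ‖(w:ℝ→V) ε‖ ≤ ε ^ K * (ε ^ (-(M:ℝ)) + ε) := by nlinarith
      _ = ε ^ ((K:ℝ)) * ε ^ (-(M:ℝ)) + ε ^ ((K:ℝ)) * ε := by rw [← e1]; ring
      _ = ε ^ ((K:ℝ) - M) + ε ^ ((K:ℝ) + 1) := by rw [e2, e3]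
      _ ≤ 2 * ε ^ ((K:ℝ) - M) := by linarith
      _ ≤ ε ^ ((K:ℝ) - M - 1) := step
  have hvA : (QuotientAddGroup.mk (w + wK) : GN V) ∈ A := by
    apply hball
    refine lt_of_le_of_lt hsm ?_
    calc Real.exp (-((K:ℝ) - M - 1)) < Real.exp (Real.log r) :=
          Real.exp_lt_exp.2 (by linarith)
      _ = r := Real.exp_log hr
  obtain ⟨b1, c1, n1, hb1eq, hc1eq, hn1, hle1⟩ := hmax _ hvA
  have hm1 : IsNegligible (normFamily V)
      ((b1 - (w + wK) : moderateGroup (normFamily V)) : ℝ → V) := by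
    have : b1 - (w + wK) ∈ negligibleGroup (normFamily V) := by
      rw [← QuotientAddGroup.eq_iff_sub_mem]; exact hb1eq
    exact this
  have hm2 : IsNegligible (normFamily V)
      ((c1 - w : moderateGroup (normFamily V)) : ℝ → V) := by
    have : c1 - w ∈ negligibleGroup (normFamily V) := by
      rw [← QuotientAddGroup.eq_iff_sub_mem]; exact hc1eq.trans hweq.symm
    exact this
  have hwneg : ∀ m : ℕ, ∀ᶠ ε in 𝓝[>] (0:ℝ), ‖(w:ℝ→V) ε‖ ≤ ε ^ m := by
    intro m
    filter_upwards [hle1, hm1 () (m+K+2), hm2 () (m+K+2), hn1 (m+K+2), small_mem]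
      with ε hA1 hA2 hA3 hA4 hA5
    obtain ⟨h0, h12⟩ := hA5
    have hd1 : ‖(b1:ℝ→V) ε - ((w:ℝ→V) ε + ε ^ K • (w:ℝ→V) ε)‖ ≤ ε ^ (m+K+2) := hA2
    have hd2 : ‖(c1:ℝ→V) ε - (w:ℝ→V) ε‖ ≤ ε ^ (m+K+2) := hA3
    have hn1' : n1 ε ≤ ε ^ (m+K+2) := (le_abs_self _).trans hA4
    have hxg : ‖(w:ℝ→V) ε + ε ^ K • (w:ℝ→V) ε‖ = (1 + ε ^ K) * ‖(w:ℝ→V) ε‖ := by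
      rw [show (w:ℝ→V) ε + ε ^ K • (w:ℝ→V) ε = (1 + ε ^ K) • (w:ℝ→V) ε by
        rw [add_smul, one_smul], norm_smul, Real.norm_of_nonneg (by positivity)]
    have t1 : (1 + ε ^ K) * ‖(w:ℝ→V) ε‖ ≤ ‖(b1:ℝ→V) ε‖ + ε ^ (m+K+2) := by
      have htri : ‖(w:ℝ→V) ε + ε ^ K • (w:ℝ→V) ε‖ ≤ ‖(b1:ℝ→V) ε‖ +
          ‖(b1:ℝ→V) ε - ((w:ℝ→V) ε + ε ^ K • (w:ℝ→V) ε)‖ := by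
        have := norm_sub_le ((b1:ℝ→V) ε) ((b1:ℝ→V) ε - ((w:ℝ→V) ε + ε ^ K • (w:ℝ→V) ε))
        simpa using this
      rw [hxg] at htri
      linarith
    have t2 : ‖(c1:ℝ→V) ε‖ ≤ ‖(w:ℝ→V) ε‖ + ε ^ (m+K+2) := by
      have htri : ‖(c1:ℝ→V) ε‖ ≤ ‖(w:ℝ→V) ε‖ + ‖(c1:ℝ→V) ε - (w:ℝ→V) ε‖ := by
        have := norm_sub_le ((w:ℝ→V) ε) ((w:ℝ→V) ε - (c1:ℝ→V) ε)
        simpa [norm_sub_rev] using this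
      linarith
    have key : ε ^ K * ‖(w:ℝ→V) ε‖ ≤ 3 * ε ^ (m+K+2) := by linarith
    have h3' : (3:ℝ) * ε ^ (m+K+2) = (3 * ε ^ (m+2)) * ε ^ K := by ring
    have hKpos : (0:ℝ) < ε ^ K := pow_pos h0 K
    have hxle : ‖(w:ℝ→V) ε‖ ≤ 3 * ε ^ (m+2) := by
      rw [h3'] at key
      have := le_of_mul_le_mul_right (by linarith [key] :
        ‖(w:ℝ→V) ε‖ * ε ^ K ≤ (3 * ε ^ (m+2)) * ε ^ K) hKpos
      exact this
    have hfin : 3 * ε ^ (m+2) ≤ ε ^ m := by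
      have he : ε ^ (m+2) = ε ^ m * ε ^ 2 := by ring
      have h2sq : ε ^ 2 ≤ (1:ℝ)/4 := by nlinarith
      have hmn : (0:ℝ) ≤ ε ^ m := pow_nonneg h0.le m
      have hprod : ε ^ m * ε ^ 2 ≤ ε ^ m * (1/4) :=
        mul_le_mul_of_nonneg_left h2sq hmn
      rw [he]
      linarith
    linarith
  -- second stage: a nonzero vector
  haveI := hnt
  obtain ⟨x0, hx0⟩ := exists_ne (0 : V)
  have hx0n : (0:ℝ) < ‖x0‖ := norm_pos_iff.2 hx0
  obtain ⟨K2, hK2⟩ := exists_nat_gt (-Real.log r)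
  have hg2mod : IsModerate (normFamily V) (fun ε => ε ^ K2 • x0) := by
    intro i
    refine ⟨1, ?_⟩
    have hmem : Set.Ioo (0:ℝ) (min 1 (‖x0‖ + 1)⁻¹) ∈ 𝓝[>] (0:ℝ) :=
      Ioo_mem_nhdsGT_of_mem ⟨le_refl 0, by positivity⟩
    filter_upwards [hmem] with ε hε
    obtain ⟨h0, hlt⟩ := hε
    have hε1 : ε ≤ 1 := le_of_lt (lt_of_lt_of_le hlt (min_le_left _ _))
    have hεx : ε < (‖x0‖+1)⁻¹ := lt_of_lt_of_le hlt (min_le_right _ _)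
    show ‖ε ^ K2 • x0‖ ≤ ε ^ (-((1:ℕ):ℤ))
    rw [norm_smul, Real.norm_of_nonneg (by positivity)]
    have hp1 : ε ^ K2 ≤ 1 := pow_le_one₀ h0.le hε1
    have h2 : ‖x0‖ + 1 ≤ ε⁻¹ := by
      rw [le_inv_comm₀ (by positivity) h0]
      exact hεx.le
    have hz : ε ^ (-((1:ℕ):ℤ)) = ε⁻¹ := by
      rw [zpow_neg_natCast_eq]; norm_num
    rw [hz]
    nlinarith [norm_nonneg x0]
  set w2 : moderateGroup (normFamily V) := ⟨fun ε => ε ^ K2 • x0, hg2mod⟩ with hw2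
  have hva2 : (QuotientAddGroup.mk (w + w2) : GN V) - a = QuotientAddGroup.mk w2 := by
    rw [QuotientAddGroup.mk_add, ← hweq, add_sub_cancel_left]
  have hsm2 : sharpSemi (normFamily V) () ((QuotientAddGroup.mk (w + w2) : GN V) - a)
      ≤ Real.exp (-(K2:ℝ)) := by
    rw [hva2]
    apply sharpSemi_le _ w2 rfl (K2:ℝ) ‖x0‖
    filter_upwards [self_mem_nhdsWithin] with ε h0'
    have h0 : (0:ℝ) < ε := h0'
    have hcoe : ‖(w2:ℝ→V) ε‖ = ε ^ K2 * ‖x0‖ := by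
      show ‖ε ^ K2 • x0‖ = _
      rw [norm_smul, Real.norm_of_nonneg (by positivity)]
    rw [hcoe, Real.rpow_natCast, mul_comm]
  have hv2A : (QuotientAddGroup.mk (w + w2) : GN V) ∈ A := by
    apply hball
    refine lt_of_le_of_lt hsm2 ?_
    calc Real.exp (-(K2:ℝ)) < Real.exp (Real.log r) := Real.exp_lt_exp.2 (by linarith)
      _ = r := Real.exp_log hr
  obtain ⟨b2, c2, n2, hb2eq, hc2eq, hn2, hle2⟩ := hmax _ hv2A
  have hm1' : IsNegligible (normFamily V)
      ((b2 - (w + w2) : moderateGroup (normFamily V)) : ℝ → V) := by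
    have : b2 - (w + w2) ∈ negligibleGroup (normFamily V) := by
      rw [← QuotientAddGroup.eq_iff_sub_mem]; exact hb2eq
    exact this
  have hm2' : IsNegligible (normFamily V)
      ((c2 - w : moderateGroup (normFamily V)) : ℝ → V) := by
    have : c2 - w ∈ negligibleGroup (normFamily V) := by
      rw [← QuotientAddGroup.eq_iff_sub_mem]; exact hc2eq.trans hweq.symm
    exact this
  have hcon : ∀ᶠ ε in 𝓝[>] (0:ℝ), ‖x0‖ ≤ 5 * ε := by
    filter_upwards [hle2, hm1' () (K2+1), hm2' () (K2+1), hn2 (K2+1), hwneg (K2+1),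
      small_mem] with ε hA1 hA2 hA3 hA4 hA5 hA6
    obtain ⟨h0, h12⟩ := hA6
    have hd1 : ‖(b2:ℝ→V) ε - ((w:ℝ→V) ε + ε ^ K2 • x0)‖ ≤ ε ^ (K2+1) := hA2
    have hd2 : ‖(c2:ℝ→V) ε - (w:ℝ→V) ε‖ ≤ ε ^ (K2+1) := hA3
    have hn2' : n2 ε ≤ ε ^ (K2+1) := (le_abs_self _).trans hA4
    have hg2n : ‖(ε:ℝ) ^ K2 • x0‖ = ε ^ K2 * ‖x0‖ := by
      rw [norm_smul, Real.norm_of_nonneg (by positivity)]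
    have t0 : ε ^ K2 * ‖x0‖ ≤ ‖(w:ℝ→V) ε + ε ^ K2 • x0‖ + ‖(w:ℝ→V) ε‖ := by
      have := norm_sub_le ((w:ℝ→V) ε + ε ^ K2 • x0) ((w:ℝ→V) ε)
      rw [add_sub_cancel_left] at this
      rw [← hg2n]
      linarith
    have t1 : ‖(w:ℝ→V) ε + ε ^ K2 • x0‖ ≤ ‖(b2:ℝ→V) ε‖ + ε ^ (K2+1) := by
      have htri : ‖(w:ℝ→V) ε + ε ^ K2 • x0‖ ≤ ‖(b2:ℝ→V) ε‖ +
          ‖(b2:ℝ→V) ε - ((w:ℝ→V) ε + ε ^ K2 • x0)‖ := by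
        have := norm_sub_le ((b2:ℝ→V) ε) ((b2:ℝ→V) ε - ((w:ℝ→V) ε + ε ^ K2 • x0))
        simpa using this
      linarith
    have t2 : ‖(c2:ℝ→V) ε‖ ≤ ‖(w:ℝ→V) ε‖ + ε ^ (K2+1) := by
      have htri : ‖(c2:ℝ→V) ε‖ ≤ ‖(w:ℝ→V) ε‖ + ‖(c2:ℝ→V) ε - (w:ℝ→V) ε‖ := by
        have := norm_sub_le ((w:ℝ→V) ε) ((w:ℝ→V) ε - (c2:ℝ→V) ε)
        simpa [norm_sub_rev] using this
      linarith
    have key : ε ^ K2 * ‖x0‖ ≤ 5 * ε ^ (K2+1) := by linarith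
    have he : (5:ℝ) * ε ^ (K2+1) = (5 * ε) * ε ^ K2 := by ring
    have hK2pos : (0:ℝ) < ε ^ K2 := pow_pos h0 K2
    rw [he] at key
    exact le_of_mul_le_mul_right (by linarith [key] :
      ‖x0‖ * ε ^ K2 ≤ (5 * ε) * ε ^ K2) hK2pos
  have hsmall : Set.Ioo (0:ℝ) (‖x0‖/6) ∈ 𝓝[>] (0:ℝ) :=
    Ioo_mem_nhdsGT_of_mem ⟨le_refl 0, by positivity⟩
  obtain ⟨ε, hε1, hε2⟩ := (hcon.and (eventually_of_mem hsmall (fun x hx => hx))).exists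
  obtain ⟨hε0, hεx⟩ := hε2
  linarith

end Proof4e


/-- For a normed space `E`: (1) the distance from a point to a nonempty
internal set is attained; (2) the `ℝ̃`-norm attains a maximum on a sharply bounded nonempty
internal set; (3) a sharply bounded nonempty internal set is not open in the sharp topology. -/
theorem min_attained_max_attained_not_open
    {V : Type*} [NormedAddCommGroup V] [NormedSpace ℝ V] :
    (∀ A : Set (GN V), IsInternal (normFamily V) A → A.Nonempty → ∀ u : GN V,
      ∃ a ∈ A, ∀ v ∈ A, normLeNorm (u - a) (u - v)) ∧
    (∀ A : Set (GN V), IsInternal (normFamily V) A → A.Nonempty → SharplyBounded A →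
      ∃ a ∈ A, ∀ v ∈ A, normLeNorm v a) ∧
    (Nontrivial V → ∀ A : Set (GN V), IsInternal (normFamily V) A → A.Nonempty →
      SharplyBounded A → ¬ @IsOpen _ (sharpTopology (normFamily V)) A) :=
  ⟨part1, part2, part3⟩

end ColombeauPaper
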